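/- Let n be a positive integer and let a, r, s be non-negative integers with a ≤ n. Then Σ_{k=a}^{n} q^{−(2r+1)k}·[2k+1]^{2r+1}·qbinom(2n+1, n−k)·(q^{−k};q)_s·(q^{k+1};q)_s is divisible by [2n+1]·qbinom(2n, n−a) in the ring of Laurent polynomials ℤ[q, q⁻¹]; that is, the quotient is a Laurent polynomial in q with integer coefficients. -/

import Mathlib

open Polynomial

/-- The Gaussian (`q`-)binomial coefficient `qbinom n k` as a polynomial in `q = X`
with integer coefficients; it is `0` for `k > n`. -/
noncomputable def qbinom : ℕ → ℕ → Polynomial ℤ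
  | _, 0 => 1
  | 0, _ + 1 => 0
  | n + 1, k + 1 => qbinom n k + X ^ (k + 1) * qbinom n (k + 1)

/-- The `q`-integer `[n] = 1 + q + ⋯ + q^{n-1}` as a polynomial in `q = X`. -/
noncomputable def qint (n : ℕ) : Polynomial ℤ := ∑ i ∈ Finset.range n, X ^ i

/-- The canonical map from `ℤ[q]` into its fraction field. -/
noncomputable def toK (p : Polynomial ℤ) : FractionRing (Polynomial ℤ) :=
  algebraMap (Polynomial ℤ) (FractionRing (Polynomial ℤ)) p

/-- The image of `q = X` in the fraction field of `ℤ[q]`. -/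
noncomputable def q : FractionRing (Polynomial ℤ) := toK X

/-- The `q`-shifted factorial `(q^e; q)_s = (1-q^e)(1-q^{e+1})⋯(1-q^{e+s-1})`,
where `e` may be a negative integer. -/
noncomputable def qpoch (e : ℤ) (s : ℕ) : FractionRing (Polynomial ℤ) :=
  ∏ i ∈ Finset.range s, (1 - q ^ (e + (i : ℤ)))

set_option maxHeartbeats 1000000
set_option synthInstance.maxHeartbeats 200000

abbrev K := FractionRing (Polynomial ℤ)

lemma toK_inj : Function.Injective toK :=
  IsFractionRing.injective (Polynomial ℤ) (FractionRing (Polynomial ℤ))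

@[simp] lemma toK_add (p₁ p₂ : Polynomial ℤ) : toK (p₁ + p₂) = toK p₁ + toK p₂ := map_add _ _ _
@[simp] lemma toK_mul (p₁ p₂ : Polynomial ℤ) : toK (p₁ * p₂) = toK p₁ * toK p₂ := map_mul _ _ _
@[simp] lemma toK_sub (p₁ p₂ : Polynomial ℤ) : toK (p₁ - p₂) = toK p₁ - toK p₂ := map_sub _ _ _
@[simp] lemma toK_one : toK 1 = 1 := map_one _
@[simp] lemma toK_neg (p : Polynomial ℤ) : toK (-p) = -toK p := map_neg _ _
@[simp] lemma toK_zero : toK 0 = 0 := map_zero _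
@[simp] lemma toK_pow (p : Polynomial ℤ) (m : ℕ) : toK (p ^ m) = toK p ^ m := map_pow _ _ _
@[simp] lemma toK_X_pow (m : ℕ) : toK (X ^ m) = q ^ m := map_pow _ _ _

lemma q_ne_zero : q ≠ 0 := by
  intro h
  have : (X : Polynomial ℤ) = 0 := toK_inj (by rw [toK_zero]; exact h)
  exact X_ne_zero this

lemma toK_eq_zero {p : Polynomial ℤ} : toK p = 0 ↔ p = 0 := by
  constructor
  · intro h; exact toK_inj (by simpa using h)
  · rintro rfl; simp

lemma q_zpow_natCast (m : ℕ) : q ^ (m : ℤ) = toK (X ^ m) := by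
  rw [zpow_natCast, toK_X_pow]

lemma q_zpow_add (z₁ z₂ : ℤ) : q ^ (z₁ + z₂) = q ^ z₁ * q ^ z₂ := zpow_add₀ q_ne_zero _ _

lemma one_sub_q_pow_ne_zero {m : ℕ} (hm : 0 < m) : (1 : K) - q ^ (m : ℤ) ≠ 0 := by
  rw [q_zpow_natCast]
  intro h
  have h2 : toK (1 - X ^ m) = 0 := by simp [sub_eq_zero] at h ⊢; rw [h]
  rw [toK_eq_zero, sub_eq_zero] at h2
  have := congrArg (fun p => Polynomial.coeff p m) h2
  simp only [Polynomial.coeff_one, Polynomial.coeff_X_pow, if_pos rfl] at this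
  rw [if_neg (by omega)] at this
  exact one_ne_zero this.symm

-- Laurent polynomial predicate
def IsLau (z : K) : Prop := ∃ (B : Polynomial ℤ) (e : ℕ), z = toK B * q ^ (-(e : ℤ))

lemma IsLau_toK (p : Polynomial ℤ) : IsLau (toK p) := ⟨p, 0, by simp⟩

lemma IsLau_zero : IsLau 0 := ⟨0, 0, by simp⟩
lemma IsLau_one : IsLau 1 := ⟨1, 0, by simp⟩

lemma q_zpow_mul_q_zpow_neg (e : ℕ) : q ^ (e : ℤ) * q ^ (-(e:ℤ)) = 1 := by
  rw [← q_zpow_add]; simp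

lemma IsLau_mul {z₁ z₂ : K} (h₁ : IsLau z₁) (h₂ : IsLau z₂) : IsLau (z₁ * z₂) := by
  obtain ⟨B₁, e₁, rfl⟩ := h₁; obtain ⟨B₂, e₂, rfl⟩ := h₂
  exact ⟨B₁ * B₂, e₁ + e₂, by rw [toK_mul]; push_cast; rw [neg_add, q_zpow_add]; ring⟩

lemma IsLau_add {z₁ z₂ : K} (h₁ : IsLau z₁) (h₂ : IsLau z₂) : IsLau (z₁ + z₂) := by
  obtain ⟨B₁, e₁, rfl⟩ := h₁; obtain ⟨B₂, e₂, rfl⟩ := h₂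
  refine ⟨B₁ * X ^ e₂ + B₂ * X ^ e₁, e₁ + e₂, ?_⟩
  have he : ∀ e : ℕ, (q:K) ^ (-(e:ℤ)) = (q ^ e)⁻¹ := fun e => by rw [zpow_neg, zpow_natCast]
  rw [toK_add, toK_mul, toK_mul, toK_X_pow, toK_X_pow, he, he, he]
  rw [pow_add]
  field_simp
  have h2 : (q:K)^e₂ * (q⁻¹)^e₂ = 1 := by rw [inv_pow]; exact mul_inv_cancel₀ (pow_ne_zero _ q_ne_zero)
  have h1 : (q:K)^e₁ * (q⁻¹)^e₁ = 1 := by rw [inv_pow]; exact mul_inv_cancel₀ (pow_ne_zero _ q_ne_zero)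
  linear_combination (-(toK B₁ * (q⁻¹)^e₁)) * h2 + (-((q⁻¹)^e₂ * toK B₂)) * h1

lemma IsLau_neg {z : K} (h : IsLau z) : IsLau (-z) := by
  obtain ⟨B, e, rfl⟩ := h; exact ⟨-B, e, by rw [toK_neg]; ring⟩

lemma IsLau_sub {z₁ z₂ : K} (h₁ : IsLau z₁) (h₂ : IsLau z₂) : IsLau (z₁ - z₂) := by
  rw [sub_eq_add_neg]; exact IsLau_add h₁ (IsLau_neg h₂)

lemma IsLau_zpow (z : ℤ) : IsLau (q ^ z) := by
  rcases z with t | t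
  · exact ⟨X ^ t, 0, by rw [Int.ofNat_eq_coe, zpow_natCast, toK_X_pow]; simp⟩
  · exact ⟨1, t + 1, by rw [toK_one, one_mul]; norm_num [Int.negSucc_eq]⟩

lemma IsLau_sum {ι : Type*} (s : Finset ι) (f : ι → K) (h : ∀ i ∈ s, IsLau (f i)) :
    IsLau (∑ i ∈ s, f i) := by
  classical
  induction s using Finset.induction_on with
  | empty => simpa using IsLau_zero
  | insert _ _ hx ih =>
    rw [Finset.sum_insert hx]
    exact IsLau_add (h _ (Finset.mem_insert_self _ _))
      (ih fun i hi => h i (Finset.mem_insert_of_mem hi))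

-- qbinom lemmas
lemma qbinom_zero_right (n : ℕ) : qbinom n 0 = 1 := by cases n <;> simp [qbinom]

lemma qbinom_succ_succ (n k : ℕ) :
    qbinom (n+1) (k+1) = qbinom n k + X ^ (k+1) * qbinom n (k+1) := by simp [qbinom]

lemma qbinom_eq_zero : ∀ {n k : ℕ}, n < k → qbinom n k = 0 := by
  intro n
  induction n with
  | zero => intro k hk; obtain ⟨t, rfl⟩ : ∃ t, k = t + 1 := ⟨k - 1, by omega⟩; simp [qbinom]
  | succ m ih =>
    intro k hk
    obtain ⟨t, rfl⟩ : ∃ t, k = t + 1 := ⟨k - 1, by omega⟩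
    rw [qbinom_succ_succ, ih (by omega), ih (by omega)]
    ring

lemma qbinom_one_geom (n : ℕ) : (1 - X) * qbinom n 1 = 1 - X ^ n := by
  induction n with
  | zero => simp [qbinom_eq_zero]
  | succ m ih =>
    have : qbinom (m+1) 1 = 1 + X * qbinom m 1 := by
      rw [show (1:ℕ) = 0 + 1 from rfl, qbinom_succ_succ, qbinom_zero_right]; ring
    rw [this]
    linear_combination X * ih

lemma qbinom_abs : ∀ (n k : ℕ),
    (1 - X ^ (k+1)) * qbinom n (k+1) = (1 - X ^ (n - k)) * qbinom n k := by
  intro n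
  induction n with
  | zero =>
    intro k
    have h0 : qbinom 0 (k+1) = 0 := qbinom_eq_zero (by omega)
    rw [h0, Nat.zero_sub, pow_zero, sub_self, zero_mul, mul_zero]
  | succ m ih =>
    intro k
    cases k with
    | zero =>
      rw [Nat.sub_zero, qbinom_zero_right, pow_one, mul_one, qbinom_one_geom]
    | succ k' =>
      rcases Nat.lt_or_ge m (k'+1) with hk | hk
      · -- m < k'+1 : everything vanishes except possibly m = k'
        rcases Nat.lt_or_ge m k' with h2 | h2
        · rw [qbinom_eq_zero (show m+1 < k'+2 by omega),
            qbinom_eq_zero (show m+1 < k'+1 by omega)]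
          ring
        · -- m = k'
          have hmk : m = k' := by omega
          subst hmk
          rw [qbinom_eq_zero (show m+1 < m+2 by omega), mul_zero,
            show m + 1 - (m + 1) = 0 from by omega, pow_zero, sub_self, zero_mul]
      · -- k'+1 ≤ m, i.e. m = k' + t + 1
        obtain ⟨t, rfl⟩ : ∃ t, m = k' + t + 1 := ⟨m - k' - 1, by omega⟩
        have h1 := ih (k'+1)
        have h2 := ih k'
        rw [show k' + t + 1 - (k'+1) = t from by omega] at h1
        rw [show k' + t + 1 - k' = t + 1 from by omega] at h2
        rw [qbinom_succ_succ (k'+t+1) (k'+1), qbinom_succ_succ (k'+t+1) k',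
          show k' + t + 1 + 1 - (k'+1) = t + 1 from by omega]
        linear_combination (X:Polynomial ℤ)^(k'+2) * h1 + h2

-- K versions
lemma KA (n k : ℕ) :
    (1 - q ^ (k+1)) * toK (qbinom n (k+1)) = (1 - q ^ (n - k)) * toK (qbinom n k) := by
  have := congrArg toK (qbinom_abs n k)
  simpa [show toK X = q from rfl] using this

lemma one_sub_q_pow_ne_zero' {m : ℕ} (hm : 0 < m) : (1:K) - q ^ m ≠ 0 := by
  have := one_sub_q_pow_ne_zero hm
  rwa [q_zpow_natCast, toK_X_pow] at this

lemma KB (m k : ℕ) :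
    toK (qbinom (m+1) k) * (1 - q ^ (m+1-k)) = toK (qbinom m k) * (1 - q ^ (m+1)) := by
  cases k with
  | zero => rw [qbinom_zero_right, qbinom_zero_right, Nat.sub_zero]
  | succ k' =>
    rcases Nat.lt_or_ge m k' with hk | hk
    · rw [qbinom_eq_zero (show m + 1 < k'+1 by omega), qbinom_eq_zero (show m < k'+1 by omega)]
      simp
    · obtain ⟨t, rfl⟩ : ∃ t, m = k' + t := ⟨m - k', by omega⟩
      have hA := KA (k'+t) k'
      rw [show k' + t - k' = t from by omega] at hA
      apply mul_left_cancel₀ (one_sub_q_pow_ne_zero' (show 0 < k'+1 by omega))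
      have hdef : toK (qbinom (k'+t+1) (k'+1))
          = toK (qbinom (k'+t) k') + q ^ (k'+1) * toK (qbinom (k'+t) (k'+1)) := by
        rw [qbinom_succ_succ (k'+t) k', toK_add, toK_mul, toK_X_pow]
      rw [show k' + t + 1 - (k'+1) = t from by omega, hdef]
      linear_combination (q^(k'+1)*(1 - q^t) - (1 - q^(k'+1+t))) * hA

-- evaluation lemmas
lemma qbinom_eval_one : ∀ n k : ℕ, (qbinom n k).eval 1 = (n.choose k : ℤ) := by
  intro n
  induction n with
  | zero =>
    intro k
    cases k with
    | zero => simp [qbinom_zero_right]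
    | succ k' => simp [qbinom_eq_zero (show 0 < k'+1 by omega)]
  | succ m ih =>
    intro k
    cases k with
    | zero => simp [qbinom_zero_right]
    | succ k' =>
      rw [qbinom_succ_succ]
      simp only [Polynomial.eval_add, Polynomial.eval_mul, Polynomial.eval_pow,
        Polynomial.eval_X, one_pow, one_mul, ih]
      rw [Nat.choose_succ_succ]
      push_cast
      ring

lemma qbinom_eval_zero : ∀ n k : ℕ, k ≤ n → (qbinom n k).eval 0 = 1 := by
  intro n
  induction n with
  | zero => intro k hk; interval_cases k; simp [qbinom_zero_right]
  | succ m ih =>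
    intro k hk
    cases k with
    | zero => simp [qbinom_zero_right]
    | succ k' =>
      rw [qbinom_succ_succ]
      simp [ih k' (by omega)]

lemma qint_eval_one (m : ℕ) : (qint m).eval 1 = (m : ℤ) := by
  simp [qint, Polynomial.eval_finset_sum]

lemma qint_eval_zero {m : ℕ} (hm : 0 < m) : (qint m).eval 0 = 1 := by
  obtain ⟨t, rfl⟩ : ∃ t, m = t + 1 := ⟨m - 1, by omega⟩
  simp [qint, Polynomial.eval_finset_sum, Finset.sum_range_succ']

lemma qint_geom (m : ℕ) : (1 - q) * toK (qint m) = 1 - q ^ m := by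
  have : toK (qint m) = ∑ i ∈ Finset.range m, q ^ i := by
    simp [qint, toK, map_sum, q]
  rw [this]
  have := geom_sum_mul (q : K) m
  linear_combination -this
-- the certificate coefficients
noncomputable def dd (j n : ℕ) : ℕ → K
  | 0 => 0
  | 1 => q ^ ((j : ℤ) - 1 - (n : ℤ))
  | (t+2) => q ^ (-(n:ℤ)-1) * ((1 - q ^ ((j:ℤ)-1-(t:ℤ))) * dd j n (t+1)
      + q ^ ((n:ℤ)+(j:ℤ)-(t:ℤ)) * dd j n t)

noncomputable def Cc (j n : ℕ) (m : ℤ) : K :=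
  if m.natAbs ≤ j then dd j n (j - m.natAbs) else 0

lemma Cc_symm (j n : ℕ) (m : ℤ) : Cc j n (-m) = Cc j n m := by
  simp [Cc]

lemma Cc_vanish (j n : ℕ) {m : ℤ} (hm : (j:ℤ) ≤ |m|) : Cc j n m = 0 := by
  rw [Int.abs_eq_natAbs] at hm
  rcases Nat.lt_or_ge j m.natAbs with h | h
  · have : ¬ (m.natAbs ≤ j) := by omega
    simp [Cc, this]
  · have : m.natAbs = j := by omega
    simp [Cc, this, dd]

lemma dd_isLau (j n : ℕ) : ∀ t, IsLau (dd j n t) := by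
  intro t
  induction t using Nat.strong_induction_on with
  | _ t ih =>
    match t with
    | 0 => simpa [dd] using IsLau_zero
    | 1 => rw [dd]; exact IsLau_zpow _
    | (t+2) =>
      rw [dd]
      exact IsLau_mul (IsLau_zpow _)
        (IsLau_add
          (IsLau_mul (IsLau_sub IsLau_one (IsLau_zpow _)) (ih (t+1) (by omega)))
          (IsLau_mul (IsLau_zpow _) (ih t (by omega))))

lemma Cc_isLau (j n : ℕ) (m : ℤ) : IsLau (Cc j n m) := by
  unfold Cc
  split
  · exact dd_isLau j n _
  · exact IsLau_zero

lemma Em_nonneg (j n : ℕ) (m : ℤ) (hm : 0 ≤ m) :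
    Cc j n m * (1 - q ^ m) - q ^ ((n:ℤ)+1) * Cc j n (m-1) + q ^ ((n:ℤ)+m+1) * Cc j n (m+1)
      = (if m = -(j:ℤ) then 1 else 0) - (if m = (j:ℤ) then q ^ (j:ℤ) else 0) := by
  rcases lt_trichotomy m (j:ℤ) with hmj | hmj | hmj
  · -- 0 ≤ m < j
    rcases eq_or_lt_of_le hm with hm0 | hm0
    · -- m = 0 < j
      have h0 : (0:ℤ) ≤ 0 := le_refl 0
      rw [← hm0]
      have hC1 : Cc j n (0-1) = Cc j n (0+1) := by
        rw [show (0:ℤ)-1 = -(0+1) from by ring, Cc_symm]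
      rw [hC1]
      have hj0 : ¬ ((0:ℤ) = -(j:ℤ)) := by omega
      have hj1 : ¬ ((0:ℤ) = (j:ℤ)) := by omega
      rw [if_neg hj0, if_neg hj1]
      simp
    · -- 1 ≤ m < j : the defining recurrence
      have hmn : m.natAbs = m.toNat := by omega
      obtain ⟨t, ht⟩ : ∃ t : ℕ, (t:ℤ) = (j:ℤ) - m - 1 := ⟨(j - m.toNat - 1 : ℕ), by omega⟩
      have e1 : Cc j n m = dd j n (t+1) := by
        unfold Cc
        rw [if_pos (by omega)]
        congr 1
        omega
      have e2 : Cc j n (m-1) = dd j n (t+2) := by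
        unfold Cc
        rw [if_pos (by omega)]
        congr 1
        omega
      have e3 : Cc j n (m+1) = dd j n t := by
        unfold Cc
        rw [if_pos (by omega)]
        congr 1
        omega
      rw [e1, e2, e3, dd]
      rw [if_neg (by omega), if_neg (by omega)]
      have hx : ((j:ℤ) - 1 - (t:ℤ)) = m := by omega
      have hy : ((n:ℤ) + (j:ℤ) - (t:ℤ)) = (n:ℤ) + m + 1 := by omega
      rw [hx, hy]
      have hq1 : q ^ ((n:ℤ)+1) * q ^ (-(n:ℤ)-1) = 1 := by
        rw [← q_zpow_add]; norm_num
      linear_combination (-((1 - q^(m))*(dd j n (t+1)) + q^((n:ℤ)+m+1)*(dd j n t))) * hq1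
  · -- m = j
    subst hmj
    have e0 : Cc j n (j:ℤ) = 0 := Cc_vanish j n (by rw [abs_of_nonneg hm])
    have e1 : Cc j n ((j:ℤ)+1) = 0 := Cc_vanish j n (by rw [abs_of_nonneg (by omega)]; omega)
    have hj1 : (1:ℕ) ≤ j ∨ j = 0 := by omega
    rcases hj1 with hj1 | hj1
    · have e2 : Cc j n ((j:ℤ)-1) = dd j n 1 := by
        unfold Cc
        rw [if_pos (by omega)]
        congr 1
        omega
      rw [e0, e1, e2, dd]
      rw [if_neg (by omega), if_pos rfl]
      have : q ^ ((n:ℤ)+1) * q ^ ((j:ℤ)-1-(n:ℤ)) = q ^ (j:ℤ) := by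
        rw [← q_zpow_add]; ring_nf
      linear_combination (-1 : K) * this
    · subst hj1
      simp only [Nat.cast_zero] at e0 e1 ⊢
      have e2 : Cc 0 n ((0:ℤ)-1) = 0 := Cc_vanish 0 n (by norm_num)
      rw [e0, e1, e2]
      norm_num
  · -- m > j
    have e0 : Cc j n m = 0 := Cc_vanish j n (by rw [abs_of_nonneg hm]; omega)
    have e1 : Cc j n (m+1) = 0 := Cc_vanish j n (by rw [abs_of_nonneg (by omega)]; omega)
    have e2 : Cc j n (m-1) = 0 := Cc_vanish j n (by rw [abs_of_nonneg (by omega)]; omega)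
    rw [e0, e1, e2, if_neg (by omega), if_neg (by omega)]
    ring

lemma Em (j n : ℕ) (m : ℤ) :
    Cc j n m * (1 - q ^ m) - q ^ ((n:ℤ)+1) * Cc j n (m-1) + q ^ ((n:ℤ)+m+1) * Cc j n (m+1)
      = (if m = -(j:ℤ) then 1 else 0) - (if m = (j:ℤ) then q ^ (j:ℤ) else 0) := by
  rcases le_or_gt 0 m with hm | hm
  · exact Em_nonneg j n m hm
  · have h := Em_nonneg j n (-m) (by omega)
    rw [show -m - 1 = -(m+1) from by ring, show -m + 1 = -(m-1) from by ring,
      Cc_symm, Cc_symm, Cc_symm] at h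
    have hmj : ¬ (m = (j:ℤ)) := by omega
    have hmj2 : ¬ (-m = -(j:ℤ)) := by omega
    rw [if_neg hmj2] at h
    rw [if_neg hmj]
    have a1 : q ^ m * q ^ (-m) = 1 := by rw [← q_zpow_add]; norm_num
    have a2 : q ^ m * q ^ ((n:ℤ) + -m + 1) = q ^ ((n:ℤ)+1) := by
      rw [← q_zpow_add]; ring_nf
    have a3 : q ^ m * q ^ ((n:ℤ)+1) = q ^ ((n:ℤ)+m+1) := by
      rw [← q_zpow_add]; ring_nf
    by_cases hmj3 : m = -(j:ℤ)
    · rw [if_pos hmj3]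
      rw [if_pos (show -m = (j:ℤ) from by omega)] at h
      have a4 : q ^ m * q ^ (j:ℤ) = 1 := by
        rw [← q_zpow_add, show m + (j:ℤ) = 0 from by omega]; norm_num
      linear_combination (-(q^m)) * h - (Cc j n m) * a1 - (Cc j n (m+1)) * a3
        + (Cc j n (m-1)) * a2 + a4
    · rw [if_neg hmj3]
      rw [if_neg (show ¬ (-m = (j:ℤ)) from by omega)] at h
      linear_combination (-(q^m)) * h - (Cc j n m) * a1 - (Cc j n (m+1)) * a3
        + (Cc j n (m-1)) * a2
noncomputable def rho (j n : ℕ) (k : ℤ) : K :=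
  ∑ i ∈ Finset.range (2*j+1), Cc j n ((i:ℤ) - j) * q ^ (k * ((i:ℤ) - j))

lemma rho_isLau (j n : ℕ) (k : ℤ) : IsLau (rho j n k) :=
  IsLau_sum _ _ (fun i _ => IsLau_mul (Cc_isLau j n _) (IsLau_zpow _))

lemma shift1 (j n : ℕ) (k : ℤ) :
    ∑ i ∈ Finset.range (2*j+1), Cc j n ((i:ℤ)-j-1) * q ^ (k*((i:ℤ)-j))
      = q ^ k * rho j n k := by
  rw [Finset.sum_range_succ']
  have h0 : Cc j n (((0:ℕ):ℤ)-j-1) = 0 := by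
    apply Cc_vanish
    rw [show ((0:ℕ):ℤ)-j-1 = -((j:ℤ)+1) from by push_cast; ring, abs_neg,
      abs_of_nonneg (by positivity)]
    omega
  rw [h0, zero_mul, add_zero, rho, Finset.mul_sum, Finset.sum_range_succ]
  have h1 : Cc j n (((2*j:ℕ):ℤ)-j) = 0 := by
    apply Cc_vanish
    rw [show ((2*j:ℕ):ℤ)-j = (j:ℤ) from by push_cast; ring, abs_of_nonneg (by positivity)]
  rw [h1, zero_mul, mul_zero, add_zero]
  apply Finset.sum_congr rfl
  intro i _
  have e1 : ((i+1:ℕ):ℤ)-j-1 = (i:ℤ)-j := by push_cast; ring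
  have e2 : k * (((i+1:ℕ):ℤ)-j) = k * ((i:ℤ)-j) + k := by push_cast; ring
  rw [e1, e2, q_zpow_add]
  ring

lemma shift2 (j n : ℕ) (k : ℤ) :
    ∑ i ∈ Finset.range (2*j+1), Cc j n ((i:ℤ)-j+1) * q ^ ((k+1)*((i:ℤ)-j))
      = q ^ (-(k+1)) * rho j n (k+1) := by
  rw [Finset.sum_range_succ]
  have h0 : Cc j n (((2*j:ℕ):ℤ)-j+1) = 0 := by
    apply Cc_vanish
    rw [show ((2*j:ℕ):ℤ)-j+1 = (j:ℤ)+1 from by push_cast; ring, abs_of_nonneg (by positivity)]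
    omega
  rw [h0, zero_mul, add_zero, rho, Finset.mul_sum, Finset.sum_range_succ']
  have h1 : Cc j n (((0:ℕ):ℤ)-j) = 0 := by
    apply Cc_vanish
    rw [show ((0:ℕ):ℤ)-j = -(j:ℤ) from by push_cast; ring, abs_neg,
      abs_of_nonneg (by positivity)]
  rw [h1, zero_mul, mul_zero, add_zero]
  apply Finset.sum_congr rfl
  intro i _
  have e1 : ((i+1:ℕ):ℤ)-j = ((i:ℤ)-j) + 1 := by push_cast; ring
  have e2 : (k+1)*(((i:ℤ)-j)+1) = (k+1)*((i:ℤ)-j) + (k+1) := by ring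
  rw [e1, e2, q_zpow_add]
  have hqq : q^(-(k+1)) * q^(k+1) = 1 := by
    rw [← q_zpow_add, show -(k+1)+(k+1) = 0 from by ring, zpow_zero]
  linear_combination (-(Cc j n ((i:ℤ)-j+1) * q^((k+1)*((i:ℤ)-j)))) * hqq

lemma FE (j n : ℕ) (k : ℤ) :
    (1 - q ^ ((n:ℤ)+k+1)) * rho j n k
      = (q ^ (-(j:ℤ)*k) - q ^ ((j:ℤ)*(k+1))) + (1 - q ^ ((n:ℤ)-k)) * rho j n (k+1) := by
  have key : ∀ i ∈ Finset.range (2*j+1),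
      Cc j n ((i:ℤ)-j) * q ^ (k*((i:ℤ)-j)) - Cc j n ((i:ℤ)-j) * q ^ ((k+1)*((i:ℤ)-j))
        - q ^ ((n:ℤ)+1) * (Cc j n ((i:ℤ)-j-1) * q ^ (k*((i:ℤ)-j)))
        + q ^ ((n:ℤ)+1) * (Cc j n ((i:ℤ)-j+1) * q ^ ((k+1)*((i:ℤ)-j)))
      = q ^ (k*((i:ℤ)-j)) *
          ((if (i:ℤ)-j = -(j:ℤ) then 1 else 0) - (if (i:ℤ)-j = (j:ℤ) then q ^ (j:ℤ) else 0)) := by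
    intro i _
    have hE := Em j n ((i:ℤ)-j)
    have b1 : q ^ (k*((i:ℤ)-j)) * q ^ ((i:ℤ)-j) = q ^ ((k+1)*((i:ℤ)-j)) := by
      rw [← q_zpow_add]; ring_nf
    have b2 : q ^ (k*((i:ℤ)-j)) * q ^ ((n:ℤ)+((i:ℤ)-j)+1)
        = q ^ ((n:ℤ)+1) * q ^ ((k+1)*((i:ℤ)-j)) := by
      rw [← q_zpow_add, ← q_zpow_add]; ring_nf
    linear_combination q ^ (k*((i:ℤ)-j)) * hE + Cc j n ((i:ℤ)-j) * b1
      - Cc j n ((i:ℤ)-j+1) * b2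
  have e1 := Finset.sum_congr rfl key
  rw [Finset.sum_add_distrib, Finset.sum_sub_distrib, Finset.sum_sub_distrib,
    ← Finset.mul_sum, ← Finset.mul_sum, shift1, shift2] at e1
  have R1 : ∑ i ∈ Finset.range (2*j+1),
      q ^ (k*((i:ℤ)-j)) * ((if (i:ℤ)-j = -(j:ℤ) then 1 else 0)
        - (if (i:ℤ)-j = (j:ℤ) then q ^ (j:ℤ) else 0))
      = q ^ (-(j:ℤ)*k) - q ^ ((j:ℤ)*(k+1)) := by
    have split : ∀ i ∈ Finset.range (2*j+1),
        q ^ (k*((i:ℤ)-j)) * ((if (i:ℤ)-j = -(j:ℤ) then 1 else 0)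
          - (if (i:ℤ)-j = (j:ℤ) then q ^ (j:ℤ) else 0))
        = (if i = 0 then q ^ (-(j:ℤ)*k) else 0) - (if i = 2*j then q ^ ((j:ℤ)*(k+1)) else 0) := by
      intro i hi
      rcases eq_or_ne i 0 with rfl | hi0
      · rcases eq_or_ne (2*j) 0 with hj0 | hj0
        · have hj : j = 0 := by omega
          subst hj
          norm_num
        · have c1 : ((0:ℕ):ℤ)-(j:ℤ) = -(j:ℤ) := by push_cast; ring
          have c2 : ¬(((0:ℕ):ℤ)-(j:ℤ) = (j:ℤ)) := by push_cast; omega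
          have c3 : ¬((0:ℕ) = 2*j) := by omega
          rw [if_pos c1, if_neg c2, if_pos (Eq.refl (0:ℕ)), if_neg c3]
          rw [show k*(((0:ℕ):ℤ)-j) = -(j:ℤ)*k from by push_cast; ring]
          ring
      · rcases eq_or_ne i (2*j) with rfl | hi2
        · have hj1 : 1 ≤ j := by omega
          have c1 : ¬(((2*j:ℕ):ℤ)-(j:ℤ) = -(j:ℤ)) := by push_cast; omega
          have c2 : ((2*j:ℕ):ℤ)-(j:ℤ) = (j:ℤ) := by push_cast; ring
          rw [if_neg c1, if_pos c2, if_neg hi0, if_pos (Eq.refl (2*j))]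
          rw [show k*(((2*j:ℕ):ℤ)-j) = (j:ℤ)*k from by push_cast; ring]
          rw [show ((j:ℤ))*(k+1) = (j:ℤ)*k + j from by ring, q_zpow_add]
          ring
        · have c1 : ¬((i:ℤ)-(j:ℤ) = -(j:ℤ)) := by push_cast; omega
          have c2 : ¬((i:ℤ)-(j:ℤ) = (j:ℤ)) := by
            have : i ≠ 2*j := hi2
            push_cast; omega
          rw [if_neg c1, if_neg c2, if_neg hi0, if_neg hi2]
          ring
    rw [Finset.sum_congr rfl split, Finset.sum_sub_distrib,
      Finset.sum_ite_eq' (Finset.range (2*j+1)) 0, Finset.sum_ite_eq' (Finset.range (2*j+1)) (2*j),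
      if_pos (Finset.mem_range.mpr (by omega)), if_pos (Finset.mem_range.mpr (by omega))]
  rw [R1] at e1
  have m1 : q ^ ((n:ℤ)+1) * (q ^ k * rho j n k) = q ^ ((n:ℤ)+k+1) * rho j n k := by
    rw [← mul_assoc, ← q_zpow_add]; ring_nf
  have m2 : q ^ ((n:ℤ)+1) * (q ^ (-(k+1)) * rho j n (k+1)) = q ^ ((n:ℤ)-k) * rho j n (k+1) := by
    rw [← mul_assoc, ← q_zpow_add]; ring_nf
  rw [m1, m2] at e1
  have s1 : ∑ x ∈ Finset.range (2*j+1), Cc j n ((x:ℤ)-j) * q ^ (k*((x:ℤ)-j)) = rho j n k := rfl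
  have s2 : ∑ x ∈ Finset.range (2*j+1), Cc j n ((x:ℤ)-j) * q ^ ((k+1)*((x:ℤ)-j))
      = rho j n (k+1) := rfl
  linear_combination e1 - s1 + s2
lemma q_zpow_nat (m : ℕ) : q ^ ((m:ℤ)) = q ^ m := by rw [q_zpow_natCast, toK_X_pow]

lemma tele (j n : ℕ) : ∀ t a, a ≤ n → n - a = t →
    ∑ k ∈ Finset.Icc a n,
        (q ^ (-(j:ℤ)*(k:ℤ)) - q ^ ((j:ℤ)*((k:ℤ)+1))) * toK (qbinom (2*n+1) (n-k))
      = (1 - q ^ (2*n+1)) * toK (qbinom (2*n) (n-a)) * rho j n (a:ℤ) := by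
  intro t
  induction t with
  | zero =>
    intro a ha hta
    have han : a = n := by omega
    subst han
    rw [Finset.Icc_self, Finset.sum_singleton, Nat.sub_self, qbinom_zero_right, toK_one, mul_one]
    have hFE := FE j a (a:ℤ)
    rw [show (a:ℤ) - (a:ℤ) = 0 from by ring, zpow_zero, sub_self, zero_mul, add_zero,
      show (a:ℤ) + (a:ℤ) + 1 = ((2*a+1 : ℕ) : ℤ) from by push_cast; ring, q_zpow_nat] at hFE
    rw [qbinom_zero_right, toK_one, mul_one]
    linear_combination -hFE
  | succ t ih =>
    intro a ha hta
    have han : a < n := by omega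
    have hmem : a + 1 ≤ n := by omega
    rw [← Finset.Ioc_insert_left (show a ≤ n from ha),
      Finset.sum_insert Finset.left_notMem_Ioc, ← Finset.Icc_add_one_left_eq_Ioc,
      ih (a+1) hmem (by omega)]
    apply mul_left_cancel₀ (one_sub_q_pow_ne_zero' (show 0 < n+a+1 by omega))
    have I1 : toK (qbinom (2*n+1) (n-a)) * (1 - q^(n+a+1)) =
        toK (qbinom (2*n) (n-a)) * (1 - q^(2*n+1)) := by
      have := KB (2*n) (n-a)
      rwa [show 2*n+1-(n-a) = n+a+1 from by omega] at this
    have I2 : (1 - q^(n-a)) * toK (qbinom (2*n) (n-a)) =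
        (1 - q^(n+a+1)) * toK (qbinom (2*n) (n-(a+1))) := by
      have := KA (2*n) (n-a-1)
      rw [show n-a-1+1 = n-a from by omega, show 2*n-(n-a-1) = n+a+1 from by omega] at this
      rw [this, show n-(a+1) = n-a-1 from by omega]
    have hFE := FE j n (a:ℤ)
    rw [show (n:ℤ) + (a:ℤ) + 1 = ((n+a+1 : ℕ) : ℤ) from by push_cast; ring, q_zpow_nat,
      show (n:ℤ) - (a:ℤ) = ((n-a : ℕ) : ℤ) from by push_cast; omega, q_zpow_nat] at hFE
    have hrho : rho j n ((a:ℤ)+1) = rho j n (((a+1:ℕ)):ℤ) := by norm_num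
    rw [hrho] at hFE
    linear_combination (q ^ (-(j:ℤ)*(a:ℤ)) - q ^ ((j:ℤ)*((a:ℤ)+1))) * I1
      - ((1 - q^(2*n+1)) * rho j n ((a+1 : ℕ):ℤ)) * I2
      - ((1 - q^(2*n+1)) * toK (qbinom (2*n) (n-a))) * hFE
noncomputable def ww (j k : ℕ) : K := q ^ (-(j:ℤ)*(k:ℤ)) - q ^ ((j:ℤ)*((k:ℤ)+1))
noncomputable def uu (k : ℕ) : K := q ^ (-(k:ℤ)) + q ^ ((k:ℤ)+1)

lemma ww_zero (k : ℕ) : ww 0 k = 0 := by simp [ww]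

lemma ww_eq (j k : ℕ) : ww j k = (q ^ (-(k:ℤ)))^j - (q ^ ((k:ℤ)+1))^j := by
  rw [ww, show -(j:ℤ)*(k:ℤ) = (-(k:ℤ))*(j:ℤ) from by ring,
    show (j:ℤ)*((k:ℤ)+1) = ((k:ℤ)+1)*(j:ℤ) from by ring,
    zpow_mul, zpow_mul, zpow_natCast, zpow_natCast]

lemma hXY (k : ℕ) : q ^ (-(k:ℤ)) * q ^ ((k:ℤ)+1) = q := by
  rw [← q_zpow_add, show -(k:ℤ) + ((k:ℤ)+1) = 1 from by ring, zpow_one]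

lemma uw (j k : ℕ) : uu k * ww (j+1) k = ww (j+2) k + q * ww j k := by
  rw [ww_eq, ww_eq, ww_eq, uu]
  have h := hXY k
  set X := q ^ (-(k:ℤ))
  set Y := q ^ ((k:ℤ)+1)
  linear_combination (X^j - Y^j) * h

lemma IsLau_q : IsLau q := ⟨X, 0, by simp [q]⟩

lemma sum_ext' {N M : ℕ} (hNM : N ≤ M) (f : ℕ → K) (hsupp : ∀ j, N ≤ j → f j = 0) :
    ∑ j ∈ Finset.range N, f j = ∑ j ∈ Finset.range M, f j := by
  apply Finset.sum_subset (Finset.range_subset_range.mpr hNM)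
  intro x _ hx
  exact hsupp x (by simpa using hx)

lemma sum_shift2 (g : ℕ → K) (M M' : ℕ) (h0 : g 0 = 0) (h1 : g 1 = 0)
    (htop : ∀ j, M ≤ j → g j = 0) (hM : M ≤ M'+2) :
    ∑ j ∈ Finset.range M, g j = ∑ j ∈ Finset.range M', g (j+2) := by
  rw [sum_ext' hM g htop, Finset.sum_range_succ', h0, add_zero, Finset.sum_range_succ']
  rw [show (0:ℕ)+1 = 1 from rfl, h1, add_zero]

def Exp (f : ℕ → K) : Prop := ∃ (N : ℕ) (γ : ℕ → K),
  (∀ j, IsLau (γ j)) ∧ γ 0 = 0 ∧ (∀ j, N ≤ j → γ j = 0) ∧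
  ∀ k : ℕ, f k = ∑ j ∈ Finset.range N, γ j * ww j k

lemma Exp_congr {f g : ℕ → K} (h : ∀ k, f k = g k) (hf : Exp f) : Exp g := by
  obtain ⟨N, γ, h1, h2, h3, h4⟩ := hf
  exact ⟨N, γ, h1, h2, h3, fun k => by rw [← h k]; exact h4 k⟩

lemma Exp_w1 : Exp (fun k => ww 1 k) := by
  refine ⟨2, fun j => if j = 1 then 1 else 0, fun j => ?_, rfl, fun j hj => ?_, fun k => ?_⟩
  · dsimp only
    split
    · exact IsLau_one
    · exact IsLau_zero
  · dsimp only
    rw [if_neg (by omega)]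
  · rw [Finset.sum_range_succ, Finset.sum_range_succ, Finset.sum_range_zero]
    norm_num

lemma Exp_add {f g : ℕ → K} (hf : Exp f) (hg : Exp g) : Exp (fun k => f k + g k) := by
  obtain ⟨N₁, γ₁, a1, a2, a3, a4⟩ := hf
  obtain ⟨N₂, γ₂, b1, b2, b3, b4⟩ := hg
  refine ⟨max N₁ N₂, fun j => γ₁ j + γ₂ j, fun j => IsLau_add (a1 j) (b1 j),
    by dsimp only; rw [a2, b2, add_zero],
    fun j hj => by dsimp only; rw [a3 j (by omega), b3 j (by omega), add_zero],
    fun k => ?_⟩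
  dsimp only
  rw [a4 k, b4 k,
    sum_ext' (le_max_left N₁ N₂) (fun j => γ₁ j * ww j k) (fun j hj => by rw [a3 j hj, zero_mul]),
    sum_ext' (le_max_right N₁ N₂) (fun j => γ₂ j * ww j k) (fun j hj => by rw [b3 j hj, zero_mul]),
    ← Finset.sum_add_distrib]
  exact Finset.sum_congr rfl (fun j _ => by ring)

lemma Exp_smul {f : ℕ → K} {c : K} (hc : IsLau c) (hf : Exp f) : Exp (fun k => c * f k) := by
  obtain ⟨N, γ, a1, a2, a3, a4⟩ := hf
  refine ⟨N, fun j => c * γ j, fun j => IsLau_mul hc (a1 j), by dsimp only; rw [a2, mul_zero],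
    fun j hj => by dsimp only; rw [a3 j hj, mul_zero], fun k => ?_⟩
  dsimp only
  rw [a4 k, Finset.mul_sum]
  exact Finset.sum_congr rfl (fun j _ => by ring)

lemma Exp_mul_uu {f : ℕ → K} (hf : Exp f) : Exp (fun k => uu k * f k) := by
  obtain ⟨N, γ, a1, a2, a3, a4⟩ := hf
  refine ⟨N+2, fun j => if j = 0 then 0 else γ (j-1) + q * γ (j+1), fun j => ?_, rfl,
    fun j hj => ?_, fun k => ?_⟩
  · dsimp only
    split
    · exact IsLau_zero
    · exact IsLau_add (a1 _) (IsLau_mul IsLau_q (a1 _))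
  · dsimp only
    rw [if_neg (by omega), a3 (j-1) (by omega), a3 (j+1) (by omega), mul_zero, add_zero]
  · dsimp only
    calc uu k * f k
          = ∑ j ∈ Finset.range (N+1), γ j * (uu k * ww j k) := by
            rw [a4 k, sum_ext' (show N ≤ N+1 by omega) (fun j => γ j * ww j k)
              (fun j hj => by rw [a3 j hj, zero_mul]), Finset.mul_sum]
            exact Finset.sum_congr rfl (fun j _ => by ring)
        _ = ∑ j ∈ Finset.range (N+1), (γ j * ww (j+1) k + γ j * (q * ww (j-1) k)) := by
            apply Finset.sum_congr rfl
            intro j _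
            rcases Nat.eq_zero_or_pos j with rfl | hj0
            · rw [a2]; ring
            · obtain ⟨j', rfl⟩ : ∃ j'', j = j''+1 := ⟨j-1, by omega⟩
              rw [show j'+1-1 = j' from rfl, uw j' k]
              ring
        _ = (∑ j ∈ Finset.range (N+1), γ j * ww (j+1) k)
              + ∑ j ∈ Finset.range (N+1), γ j * (q * ww (j-1) k) := Finset.sum_add_distrib
        _ = (∑ j ∈ Finset.range (N+1), γ j * ww (j+1) k)
              + ∑ j ∈ Finset.range (N+1), γ (j+2) * (q * ww (j+2-1) k) := by
            congr 1
            apply sum_shift2 (fun j => γ j * (q * ww (j-1) k)) (N+1) (N+1)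
            · rw [a2, zero_mul]
            · rw [show (1:ℕ)-1 = 0 from rfl, ww_zero, mul_zero, mul_zero]
            · intro j hj
              rw [a3 j (by omega), zero_mul]
            · omega
        _ = ∑ j ∈ Finset.range (N+1), (γ j + q * γ (j+2)) * ww (j+1) k := by
            rw [← Finset.sum_add_distrib]
            exact Finset.sum_congr rfl (fun j _ => by
              rw [show j+2-1 = j+1 from rfl]; ring)
        _ = ∑ j ∈ Finset.range (N+2), (if j = 0 then 0 else γ (j-1) + q * γ (j+1)) * ww j k := by
            conv_rhs => rw [Finset.sum_range_succ']
            rw [if_pos rfl, zero_mul, add_zero]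
            apply Finset.sum_congr rfl
            intro j _
            rw [if_neg (Nat.succ_ne_zero j), show j+1-1 = j from rfl,
              show j+1+1 = j+2 from rfl]
lemma IsLau_qpow (m : ℕ) : IsLau (q ^ m) := ⟨X ^ m, 0, by simp [q]⟩

lemma Exp_vr (r : ℕ) : Exp (fun k => ww 1 k * ((uu k)^2 - 4*q)^r) := by
  induction r with
  | zero => exact Exp_congr (fun k => by rw [pow_zero, mul_one]) Exp_w1
  | succ r ih =>
    have h4q : IsLau (-(4*q)) := IsLau_neg (IsLau_mul ⟨4, 0, by simp [toK, map_ofNat]⟩ IsLau_q)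
    have h1 := Exp_mul_uu (Exp_mul_uu ih)
    have h2 := Exp_smul h4q ih
    exact Exp_congr (fun k => by ring) (Exp_add h1 h2)

lemma Exp_weight (r s : ℕ) : Exp (fun k => ww 1 k * ((uu k)^2 - 4*q)^r *
    ∏ i ∈ Finset.range s, ((1 + q^(2*i+1)) - q^i * uu k)) := by
  induction s with
  | zero => exact Exp_congr (fun k => by rw [Finset.prod_range_zero, mul_one]) (Exp_vr r)
  | succ s ih =>
    have hc : IsLau ((1:K) + q^(2*s+1)) := IsLau_add IsLau_one (IsLau_qpow _)
    have hc' : IsLau (-(q^s : K)) := IsLau_neg (IsLau_qpow _)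
    have h1 := Exp_smul hc ih
    have h2 := Exp_smul hc' (Exp_mul_uu ih)
    refine Exp_congr (fun k => ?_) (Exp_add h1 h2)
    rw [Finset.prod_range_succ]
    ring

lemma poch_factor (k i : ℕ) :
    (1 - q ^ (-(k:ℤ)+(i:ℤ))) * (1 - q ^ (((k:ℤ)+1)+(i:ℤ)))
      = (1 + q^(2*i+1)) - q^i * uu k := by
  rw [uu]
  have m1 : q ^ (-(k:ℤ)+(i:ℤ)) = q^((i:ℤ)) * q ^ (-(k:ℤ)) := by
    rw [← q_zpow_add]; ring_nf
  have m2 : q ^ (((k:ℤ)+1)+(i:ℤ)) = q^((i:ℤ)) * q ^ ((k:ℤ)+1) := by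
    rw [← q_zpow_add]; ring_nf
  have h2i : (q:K)^(2*i+1) = q^((i:ℤ)) * q^((i:ℤ)) * q :=
    calc (q:K)^(2*i+1) = q^(((2*i+1 : ℕ)):ℤ) := (q_zpow_nat _).symm
      _ = q^((i:ℤ) + (i:ℤ) + 1) := by
          rw [show (((2*i+1 : ℕ)):ℤ) = (i:ℤ)+(i:ℤ)+1 from by push_cast; ring]
      _ = q^((i:ℤ)) * q^((i:ℤ)) * q^(1:ℤ) := by rw [q_zpow_add, q_zpow_add]
      _ = q^((i:ℤ)) * q^((i:ℤ)) * q := by rw [zpow_one]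
  have hP : (q:K)^i = q^((i:ℤ)) := (q_zpow_nat i).symm
  rw [m1, m2, h2i, hP]
  linear_combination (q^((i:ℤ))*q^((i:ℤ))) * hXY k

lemma weight_eq (r s : ℕ) (k : ℕ) :
    (1-q)^(2*r+1) * (q ^ (-((2 * r + 1 : ℕ) : ℤ) * (k : ℤ)) * toK (qint (2 * k + 1)) ^ (2 * r + 1)
        * qpoch (-(k : ℤ)) s * qpoch ((k : ℤ) + 1) s)
      = ww 1 k * ((uu k)^2 - 4*q)^r *
          ∏ i ∈ Finset.range s, ((1 + q^(2*i+1)) - q^i * uu k) := by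
  have c1 : (1-q) * toK (qint (2*k+1)) * q^(-(k:ℤ)) = ww 1 k := by
    have hg := qint_geom (2*k+1)
    have hm : (q:K)^(2*k+1) * q^(-(k:ℤ)) = q^((k:ℤ)+1) := by
      rw [← q_zpow_nat (2*k+1), ← q_zpow_add,
        show ((2*k+1:ℕ):ℤ) + -(k:ℤ) = (k:ℤ)+1 from by push_cast; ring]
    rw [ww, show -((1:ℕ):ℤ)*(k:ℤ) = -(k:ℤ) from by push_cast; ring,
      show ((1:ℕ):ℤ)*((k:ℤ)+1) = (k:ℤ)+1 from by push_cast; ring]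
    linear_combination q^(-(k:ℤ)) * hg - hm
  have c2 : (ww 1 k)^2 = (uu k)^2 - 4*q := by
    rw [ww_eq, uu, pow_one, pow_one]
    linear_combination (-4 : K) * hXY k
  have c3 : qpoch (-(k:ℤ)) s * qpoch ((k:ℤ)+1) s
      = ∏ i ∈ Finset.range s, ((1 + q^(2*i+1)) - q^i * uu k) := by
    rw [qpoch, qpoch, ← Finset.prod_mul_distrib]
    exact Finset.prod_congr rfl (fun i _ => poch_factor k i)
  have hpow : q ^ (-(((2*r+1:ℕ)):ℤ) * (k:ℤ)) = (q ^ (-(k:ℤ)))^(2*r+1) := by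
    rw [show -(((2*r+1:ℕ)):ℤ) * (k:ℤ) = (-(k:ℤ)) * ((2*r+1:ℕ):ℤ) from by push_cast; ring,
      zpow_mul, zpow_natCast]
  calc (1-q)^(2*r+1) * (q ^ (-((2 * r + 1 : ℕ) : ℤ) * (k : ℤ)) * toK (qint (2 * k + 1)) ^ (2 * r + 1)
        * qpoch (-(k : ℤ)) s * qpoch ((k : ℤ) + 1) s)
      = ((1-q) * toK (qint (2*k+1)) * q^(-(k:ℤ)))^(2*r+1)
          * (qpoch (-(k:ℤ)) s * qpoch ((k:ℤ)+1) s) := by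
        rw [hpow, mul_pow, mul_pow]; ring
    _ = (ww 1 k)^(2*r+1) * (qpoch (-(k:ℤ)) s * qpoch ((k:ℤ)+1) s) := by rw [c1]
    _ = (ww 1 k * ((ww 1 k)^2)^r) * (qpoch (-(k:ℤ)) s * qpoch ((k:ℤ)+1) s) := by
        rw [← pow_mul]; ring
    _ = (ww 1 k * ((uu k)^2 - 4*q)^r) * (qpoch (-(k:ℤ)) s * qpoch ((k:ℤ)+1) s) := by rw [c2]
    _ = ww 1 k * ((uu k)^2 - 4*q)^r *
          ∏ i ∈ Finset.range s, ((1 + q^(2*i+1)) - q^i * uu k) := by rw [c3, mul_assoc]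

lemma main_sum (n a r s : ℕ) (ha : a ≤ n) :
    ∃ g : K, IsLau g ∧
      (1-q)^(2*r+1) * ∑ k ∈ Finset.Icc a n,
          q ^ (-((2 * r + 1 : ℕ) : ℤ) * (k : ℤ)) * toK (qint (2 * k + 1)) ^ (2 * r + 1) *
            toK (qbinom (2 * n + 1) (n - k)) * qpoch (-(k : ℤ)) s * qpoch ((k : ℤ) + 1) s
        = (1 - q ^ (2*n+1)) * toK (qbinom (2*n) (n-a)) * g := by
  obtain ⟨N, γ, h1, h2, h3, h4⟩ := Exp_weight r s
  dsimp only at h4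
  refine ⟨∑ j ∈ Finset.range N, γ j * rho j n a,
    IsLau_sum _ _ (fun j _ => IsLau_mul (h1 j) (rho_isLau j n a)), ?_⟩
  calc (1-q)^(2*r+1) * ∑ k ∈ Finset.Icc a n,
          q ^ (-((2 * r + 1 : ℕ) : ℤ) * (k : ℤ)) * toK (qint (2 * k + 1)) ^ (2 * r + 1) *
            toK (qbinom (2 * n + 1) (n - k)) * qpoch (-(k : ℤ)) s * qpoch ((k : ℤ) + 1) s
      = ∑ k ∈ Finset.Icc a n, ∑ j ∈ Finset.range N,
          (γ j * ww j k) * toK (qbinom (2*n+1) (n-k)) := by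
        rw [Finset.mul_sum]
        apply Finset.sum_congr rfl
        intro k _
        rw [← Finset.sum_mul, ← h4 k, ← weight_eq r s k]
        ring
    _ = ∑ j ∈ Finset.range N, γ j * ∑ k ∈ Finset.Icc a n,
          (q ^ (-(j:ℤ)*(k:ℤ)) - q ^ ((j:ℤ)*((k:ℤ)+1))) * toK (qbinom (2*n+1) (n-k)) := by
        rw [Finset.sum_comm]
        apply Finset.sum_congr rfl
        intro j _
        rw [Finset.mul_sum]
        apply Finset.sum_congr rfl
        intro k _
        rw [ww]
        ring
    _ = ∑ j ∈ Finset.range N, γ j *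
          ((1 - q ^ (2*n+1)) * toK (qbinom (2*n) (n-a)) * rho j n a) := by
        apply Finset.sum_congr rfl
        intro j _
        rw [tele j n (n-a) a ha rfl]
    _ = (1 - q ^ (2*n+1)) * toK (qbinom (2*n) (n-a)) * ∑ j ∈ Finset.range N, γ j * rho j n a := by
        rw [Finset.mul_sum]
        apply Finset.sum_congr rfl
        intro j _
        ring
lemma toK_prod {ι : Type*} (t : Finset ι) (f : ι → Polynomial ℤ) :
    toK (∏ i ∈ t, f i) = ∏ i ∈ t, toK (f i) := map_prod _ _ _

lemma dvd_cancel_prime {p M C : Polynomial ℤ} (hp : Prime p) (hpM : ¬ p ∣ M)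
    (h : M ∣ p * C) : M ∣ C := by
  obtain ⟨E, hE⟩ := h
  have hpME : p ∣ M * E := ⟨C, hE.symm⟩
  rcases hp.2.2 M E hpME with h' | h'
  · exact absurd h' hpM
  · obtain ⟨E', rfl⟩ := h'
    refine ⟨E', ?_⟩
    have hc : p * C = p * (M * E') := by rw [hE]; ring
    exact mul_left_cancel₀ hp.ne_zero hc

lemma dvd_cancel_prime_pow {p M A : Polynomial ℤ} (hp : Prime p) (hpM : ¬ p ∣ M) :
    ∀ t, M ∣ p^t * A → M ∣ A := by
  intro t
  induction t with
  | zero => intro h; simpa using h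
  | succ t ih =>
    intro h
    apply ih
    apply dvd_cancel_prime hp hpM
    have he : p^(t+1)*A = p*(p^t*A) := by ring
    rwa [he] at h

lemma summand_poly (n r s k : ℕ) (hk : k ≤ n) :
    q ^ ((((2*r+1+s)*n : ℕ)):ℤ) *
        (q ^ (-((2 * r + 1 : ℕ) : ℤ) * (k : ℤ)) * toK (qint (2 * k + 1)) ^ (2 * r + 1) *
          toK (qbinom (2 * n + 1) (n - k)) * qpoch (-(k : ℤ)) s * qpoch ((k : ℤ) + 1) s)
      = toK (X^((2*r+1+s)*(n-k)) * (qint (2*k+1)^(2*r+1) * qbinom (2*n+1) (n-k) *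
          (∏ i ∈ Finset.range s, (X^k - X^i)) * ∏ i ∈ Finset.range s, (1 - X^(k+1+i)))) := by
  have hp1 : qpoch (-(k:ℤ)) s
      = toK (∏ i ∈ Finset.range s, (X^k - X^i)) * q ^ (-((k*s : ℕ):ℤ)) := by
    rw [qpoch, toK_prod]
    have hstep : ∀ i ∈ Finset.range s,
        (1 : K) - q ^ (-(k:ℤ)+(i:ℤ)) = toK (X^k - X^i) * q ^ (-(k:ℤ)) := by
      intro i _
      rw [toK_sub, toK_X_pow, toK_X_pow]
      have hk1 : (q:K)^k * q^(-(k:ℤ)) = 1 := by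
        rw [← q_zpow_nat k, ← q_zpow_add]; norm_num
      have hk2 : (q:K)^i * q^(-(k:ℤ)) = q^(-(k:ℤ)+(i:ℤ)) := by
        rw [← q_zpow_nat i, ← q_zpow_add, show (i:ℤ) + -(k:ℤ) = -(k:ℤ)+(i:ℤ) from by ring]
      linear_combination -hk1 + hk2
    rw [Finset.prod_congr rfl hstep, Finset.prod_mul_distrib, Finset.prod_const,
      Finset.card_range]
    congr 1
    rw [← zpow_natCast (q ^ (-(k:ℤ))) s, ← zpow_mul,
      show -(k:ℤ)*(s:ℤ) = -((k*s : ℕ):ℤ) from by push_cast; ring]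
  have hp2 : qpoch ((k:ℤ)+1) s = toK (∏ i ∈ Finset.range s, (1 - X^(k+1+i))) := by
    rw [qpoch, toK_prod]
    apply Finset.prod_congr rfl
    intro i _
    rw [toK_sub, toK_one, toK_X_pow, ← q_zpow_nat (k+1+i),
      show (((k+1+i : ℕ)):ℤ) = (k:ℤ)+1+(i:ℤ) from by push_cast; ring]
  have hqcollect : q ^ ((((2*r+1+s)*n : ℕ)):ℤ) * q ^ (-((2 * r + 1 : ℕ) : ℤ) * (k : ℤ))
      * q ^ (-((k*s : ℕ):ℤ)) = toK (X^((2*r+1+s)*(n-k))) := by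
    rw [← q_zpow_add, ← q_zpow_add, toK_X_pow, ← q_zpow_nat ((2*r+1+s)*(n-k))]
    congr 1
    push_cast [Nat.cast_sub hk]
    ring
  rw [hp1, hp2]
  rw [show toK (X^((2*r+1+s)*(n-k))) = toK X ^ ((2*r+1+s)*(n-k)) from toK_pow _ _] at hqcollect
  simp only [toK_mul, toK_pow]
  linear_combination (toK (qint (2*k+1))^(2*r+1) * toK (qbinom (2*n+1) (n-k)) *
    toK (∏ i ∈ Finset.range s, (X^k - X^i)) * toK (∏ i ∈ Finset.range s, (1 - X^(k+1+i)))) * hqcollect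

/-- Lemma 5.2 of the paper:
`∑_{k=a}^{n} q^{-(2r+1)k}·[2k+1]^{2r+1}·qbinom(2n+1, n-k)·(q^{-k};q)_s·(q^{k+1};q)_s`
is divisible by `[2n+1]·qbinom(2n, n-a)` in `ℤ[q, q⁻¹]`, i.e. the quotient is a
Laurent polynomial in `q` with integer coefficients. -/
theorem stmt16 (n a r s : ℕ) (hn : 0 < n) (ha : a ≤ n) :
    ∃ (P : Polynomial ℤ) (d : ℕ),
      ∑ k ∈ Finset.Icc a n,
          q ^ (-((2 * r + 1 : ℕ) : ℤ) * (k : ℤ)) * toK (qint (2 * k + 1)) ^ (2 * r + 1) *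
            toK (qbinom (2 * n + 1) (n - k)) * qpoch (-(k : ℤ)) s * qpoch ((k : ℤ) + 1) s =
        toK (qint (2 * n + 1)) * toK (qbinom (2 * n) (n - a)) * (toK P * q ^ (-(d : ℤ))) := by
  obtain ⟨g, hgL, hg⟩ := main_sum n a r s ha
  obtain ⟨B, e, rfl⟩ := hgL
  set S : K := ∑ k ∈ Finset.Icc a n,
      q ^ (-((2 * r + 1 : ℕ) : ℤ) * (k : ℤ)) * toK (qint (2 * k + 1)) ^ (2 * r + 1) *
        toK (qbinom (2 * n + 1) (n - k)) * qpoch (-(k : ℤ)) s * qpoch ((k : ℤ) + 1) s with hS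
  set D : ℕ := (2*r+1+s)*n with hD
  set A : Polynomial ℤ := ∑ k ∈ Finset.Icc a n,
      X^((2*r+1+s)*(n-k)) * (qint (2*k+1)^(2*r+1) * qbinom (2*n+1) (n-k) *
        (∏ i ∈ Finset.range s, (X^k - X^i)) * ∏ i ∈ Finset.range s, (1 - X^(k+1+i))) with hA
  have hSA : q ^ ((D : ℕ):ℤ) * S = toK A := by
    rw [hS, hA, Finset.mul_sum, show toK (∑ k ∈ Finset.Icc a n,
        X^((2*r+1+s)*(n-k)) * (qint (2*k+1)^(2*r+1) * qbinom (2*n+1) (n-k) *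
          (∏ i ∈ Finset.range s, (X^k - X^i)) * ∏ i ∈ Finset.range s, (1 - X^(k+1+i))))
      = ∑ k ∈ Finset.Icc a n, toK (X^((2*r+1+s)*(n-k)) * (qint (2*k+1)^(2*r+1) *
          qbinom (2*n+1) (n-k) * (∏ i ∈ Finset.range s, (X^k - X^i)) *
          ∏ i ∈ Finset.range s, (1 - X^(k+1+i)))) from map_sum _ _ _]
    apply Finset.sum_congr rfl
    intro k hk
    exact summand_poly n r s k (Finset.mem_Icc.mp hk).2
  have h1q : (1:K) - q ≠ 0 := by
    have := one_sub_q_pow_ne_zero' (show 0 < 1 by omega)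
    rwa [pow_one] at this
  have eq1 : (1-q)^(2*r) * S
      = toK (qint (2*n+1)) * toK (qbinom (2*n) (n-a)) * (toK B * q^(-(e:ℤ))) := by
    apply mul_left_cancel₀ h1q
    calc (1-q) * ((1-q)^(2*r) * S) = (1-q)^(2*r+1) * S := by ring
      _ = (1 - q^(2*n+1)) * toK (qbinom (2*n) (n-a)) * (toK B * q^(-(e:ℤ))) := hg
      _ = (1-q) * (toK (qint (2*n+1)) * toK (qbinom (2*n) (n-a)) * (toK B * q^(-(e:ℤ)))) := by
          rw [← qint_geom (2*n+1)]; ring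
  have key : (1-X)^(2*r) * (A * X^e) = (qint (2*n+1) * qbinom (2*n) (n-a) * B) * X^D := by
    apply toK_inj
    simp only [toK_mul, toK_pow, toK_sub, toK_one]
    rw [show toK X = q from rfl]
    rw [show (q:K)^e = q^((e:ℤ)) from (q_zpow_nat e).symm,
      show (q:K)^D = q^((D:ℕ):ℤ) from (q_zpow_nat D).symm]
    have hee : q^((e:ℤ)) * q^(-(e:ℤ)) = 1 := by rw [← q_zpow_add]; norm_num
    linear_combination (-((1-q)^(2*r) * q^((e:ℤ)))) * hSA + (q^(((D:ℕ)):ℤ) * q^((e:ℤ))) * eq1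
      + (toK (qint (2*n+1)) * toK (qbinom (2*n) (n-a)) * toK B * q^(((D:ℕ)):ℤ)) * hee
  set M : Polynomial ℤ := qint (2*n+1) * qbinom (2*n) (n-a) with hM
  have hd1 : M ∣ X^e * ((1-X)^(2*r) * A) := by
    refine ⟨B * X^D, ?_⟩
    rw [show X^e * ((1-X)^(2*r) * A) = (1-X)^(2*r) * (A * X^e) from by ring, key, hM]
    ring
  have hXM : ¬ (X : Polynomial ℤ) ∣ M := by
    rintro ⟨E, hE⟩
    have h0 := congrArg (Polynomial.eval 0) hE
    rw [hM] at h0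
    simp only [Polynomial.eval_mul, Polynomial.eval_X, zero_mul] at h0
    rw [qint_eval_zero (show 0 < 2*n+1 by omega), qbinom_eval_zero (2*n) (n-a) (by omega)] at h0
    norm_num at h0
  have hd2 : M ∣ (1-X)^(2*r) * A := dvd_cancel_prime_pow Polynomial.prime_X hXM e hd1
  have hd3 : M ∣ (X - C 1)^(2*r) * A := by
    rwa [show ((X : Polynomial ℤ) - C 1)^(2*r) = (1-X)^(2*r) from by
      rw [Polynomial.C_1, show ((X : Polynomial ℤ) - 1) = -(1 - X) from by ring, neg_pow,
        show ((-1 : Polynomial ℤ))^(2*r) = 1 from by rw [pow_mul]; norm_num, one_mul]]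
  have hX1M : ¬ ((X : Polynomial ℤ) - C 1) ∣ M := by
    rintro ⟨E, hE⟩
    have h1 := congrArg (Polynomial.eval 1) hE
    rw [hM] at h1
    simp only [Polynomial.eval_mul, Polynomial.eval_sub, Polynomial.eval_X, Polynomial.eval_one,
      Polynomial.eval_C, sub_self, zero_mul] at h1
    rw [qint_eval_one, qbinom_eval_one] at h1
    have hne : ((2*n+1 : ℕ) : ℤ) * ((2*n).choose (n-a) : ℤ) ≠ 0 := by
      apply mul_ne_zero
      · exact_mod_cast (show (2*n+1 : ℕ) ≠ 0 by omega)
      · exact_mod_cast (Nat.choose_pos (show n-a ≤ 2*n by omega)).ne'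
    exact hne (by exact_mod_cast h1)
  have hd4 : M ∣ A := dvd_cancel_prime_pow (Polynomial.prime_X_sub_C 1) hX1M (2*r) hd3
  obtain ⟨P, hP⟩ := hd4
  refine ⟨P, D, ?_⟩
  have hDq : q ^ ((D:ℕ):ℤ) * q ^ (-((D:ℕ)):ℤ) = 1 := by rw [← q_zpow_add]; norm_num
  apply mul_left_cancel₀ (show q ^ ((D:ℕ):ℤ) ≠ 0 from zpow_ne_zero _ q_ne_zero)
  calc q ^ ((D:ℕ):ℤ) * S = toK A := hSA
    _ = toK (qint (2*n+1)) * toK (qbinom (2*n) (n-a)) * toK P * 1 := by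
        rw [hP, hM, toK_mul, toK_mul, mul_one]
    _ = toK (qint (2*n+1)) * toK (qbinom (2*n) (n-a)) * toK P *
          (q ^ ((D:ℕ):ℤ) * q ^ (-((D:ℕ)):ℤ)) := by rw [hDq]
    _ = q ^ ((D:ℕ):ℤ) * (toK (qint (2 * n + 1)) * toK (qbinom (2 * n) (n - a)) *
          (toK P * q ^ (-(D : ℕ):ℤ))) := by ring
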